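/- Let X be a completely regular Hausdorff (Tychonoff) space and let H be a non-vanishing closed ideal of C_B(X). Then the following are equivalent: (1) sp(H) is paracompact; (2) H is representable as the closure in C_B(X) of an internal direct sum ⨁_{i∈I} ⟨h_i⟩ of principal ideals generated by elements h_i of C_B(X). -/

import Mathlib

open BoundedContinuousFunction Set Filter Topology

section Preamble

variable {X : Type*} [TopologicalSpace X] {𝕜 : Type*} [RCLike 𝕜]

theorem betaExt_aux (f : X →ᵇ 𝕜) :
    Continuous (fun x => (⟨f x, by
      simpa [Metric.mem_closedBall, dist_zero_right] using f.norm_coe_le_norm x⟩ :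
        Metric.closedBall (0 : 𝕜) ‖f‖)) :=
  f.continuous.subtype_mk _

/-- `f_β`, the unique continuous extension of a bounded continuous function `f : X → 𝕜` to the
Stone–Čech compactification `βX`. -/
noncomputable def betaExt (f : X →ᵇ 𝕜) : StoneCech X → 𝕜 :=
  haveI : CompactSpace (Metric.closedBall (0 : 𝕜) ‖f‖) :=
    isCompact_iff_compactSpace.mp (isCompact_closedBall 0 ‖f‖)
  fun p => (stoneCechExtend (betaExt_aux f) p).1

theorem betaExt_unit (f : X →ᵇ 𝕜) (x : X) : betaExt f (stoneCechUnit x) = f x := by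
  haveI : CompactSpace (Metric.closedBall (0 : 𝕜) ‖f‖) :=
    isCompact_iff_compactSpace.mp (isCompact_closedBall 0 ‖f‖)
  exact congrArg Subtype.val (congrFun (stoneCechExtend_extends (betaExt_aux f)) x)

theorem continuous_betaExt (f : X →ᵇ 𝕜) : Continuous (betaExt f) := by
  haveI : CompactSpace (Metric.closedBall (0 : 𝕜) ‖f‖) :=
    isCompact_iff_compactSpace.mp (isCompact_closedBall 0 ‖f‖)
  exact continuous_subtype_val.comp (continuous_stoneCechExtend _)

/-- `λ_G X`, the union over `g ∈ G` of the cozero-sets in `βX` of the extensions `g_β`. -/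
def lambdaSet (G : Ideal (X →ᵇ 𝕜)) : Set (StoneCech X) :=
  ⋃ g ∈ G, {p | betaExt g p ≠ 0}

end Preamble


universe v

section Q

variable {T : Type v} [TopologicalSpace T]

/-- A space covered by pairwise disjoint open sets, each of which is paracompact as a
subspace, is paracompact. -/
theorem paracompact_of_disjoint_open_cover {I : Type v} {W : I → Set T}
    (ho : ∀ i, IsOpen (W i)) (hd : Pairwise (Function.onFun Disjoint W)) (hc : ⋃ i, W i = univ)
    (hp : ∀ i, ParacompactSpace (W i)) : ParacompactSpace T := by
  constructor
  intro α s hso hsc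
  have hcov : ∀ i, ⋃ a, ((Subtype.val : W i → T) ⁻¹' s a) = univ := by
    intro i
    rw [← preimage_iUnion, hsc, preimage_univ]
  have := fun i => (hp i).locallyFinite_refinement α
    (fun a => (Subtype.val : W i → T) ⁻¹' s a)
    (fun a => (hso a).preimage continuous_subtype_val) (hcov i)
  choose β t hto htc htl htr using this
  refine ⟨Σ i, β i, fun b => Subtype.val '' t b.1 b.2, ?_, ?_, ?_, ?_⟩
  · rintro ⟨i, b⟩
    exact (ho i).isOpenMap_subtype_val _ (hto i b)
  · apply eq_univ_of_forall
    intro x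
    obtain ⟨i, hxi⟩ : ∃ i, x ∈ W i := by
      have := hc ▸ mem_univ x; simpa using this
    obtain ⟨b, hb⟩ : ∃ b, (⟨x, hxi⟩ : W i) ∈ t i b := by
      have := (htc i) ▸ mem_univ (⟨x, hxi⟩ : W i); simpa using this
    exact mem_iUnion.2 ⟨⟨i, b⟩, ⟨⟨x, hxi⟩, hb, rfl⟩⟩
  · intro x
    obtain ⟨i, hxi⟩ : ∃ i, x ∈ W i := by
      have := hc ▸ mem_univ x; simpa using this
    obtain ⟨N, hN, hNfin⟩ := htl i ⟨x, hxi⟩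
    refine ⟨Subtype.val '' N, ?_, ?_⟩
    · have hmap := (ho i).isOpenEmbedding_subtypeVal.map_nhds_eq (⟨x, hxi⟩ : W i)
      rw [← hmap]
      exact image_mem_map hN
    · have himg : {b : Σ i, β i | (Subtype.val '' t b.1 b.2 ∩ Subtype.val '' N).Nonempty} ⊆
          Sigma.mk i '' {b : β i | (t i b ∩ N).Nonempty} := by
        rintro ⟨j, b⟩ ⟨y, ⟨⟨z, hz, rfl⟩, ⟨w, hw, hwz⟩⟩⟩
        have hji : j = i := by
          by_contra hne
          have hzW : (z : T) ∈ W j := z.2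
          have hwW : (z : T) ∈ W i := hwz ▸ w.2
          exact (hd hne).le_bot ⟨hzW, hwW⟩ |>.elim
        subst hji
        have : w = z := Subtype.ext hwz
        exact ⟨b, ⟨z, hz, this ▸ hw⟩, rfl⟩
      exact (hNfin.image _).subset himg
  · rintro ⟨i, b⟩
    obtain ⟨a, ha⟩ := htr i b
    exact ⟨a, (image_mono ha).trans (image_preimage_subset _ _)⟩

end Q

section P

open Relation

variable (T : Type v) [TopologicalSpace T] [T2Space T] [WeaklyLocallyCompactSpace T]
  [ParacompactSpace T]

/-- A locally compact Hausdorff paracompact space decomposes into pairwise disjoint open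
σ-compact pieces. -/
theorem exists_disjoint_sigmaCompact_cover :
    ∃ (I : Type v) (Y : I → Set T), (∀ i, IsOpen (Y i)) ∧ Pairwise (Function.onFun Disjoint Y) ∧
      (⋃ i, Y i) = univ ∧ ∀ i, ∃ K : ℕ → Set T, (∀ n, IsCompact (K n)) ∧ Y i = ⋃ n, K n := by
  classical
  -- a locally finite open cover by relatively compact sets
  obtain ⟨Kx, hKc, hKn⟩ : ∃ K : T → Set T, (∀ x, IsCompact (K x)) ∧ ∀ x, K x ∈ 𝓝 x := by
    have := fun x : T => exists_compact_mem_nhds x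
    choose K h1 h2 using this; exact ⟨K, h1, h2⟩
  obtain ⟨U, hUo, hUc, hUl, hUsub⟩ := precise_refinement (fun x => interior (Kx x))
    (fun x => isOpen_interior)
    (eq_univ_of_forall fun x => mem_iUnion.2 ⟨x, mem_interior_iff_mem_nhds.2 (hKn x)⟩)
  have hUcl : ∀ a, IsCompact (closure (U a)) := by
    intro a
    refine (hKc a).of_isClosed_subset isClosed_closure ?_
    calc closure (U a) ⊆ closure (interior (Kx a)) := closure_mono (hUsub a)
    _ ⊆ Kx a := closure_minimal interior_subset (hKc a).isClosed
  set r : T → T → Prop := fun a b => (U a ∩ U b).Nonempty with hr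
  have hrsymm : ∀ a b, r a b → r b a := fun a b h => by
    rwa [hr, inter_comm] at h
  letI sd : Setoid T := EqvGen.setoid r
  refine ⟨Quotient sd, fun i => ⋃ (a : T) (_ : Quotient.mk sd a = i), U a, ?_, ?_, ?_, ?_⟩
  · exact fun i => isOpen_iUnion fun a => isOpen_iUnion fun _ => hUo a
  · -- disjoint
    intro i j hij
    refine Set.disjoint_left.2 ?_
    rintro x hxi hxj
    simp only [mem_iUnion] at hxi hxj
    obtain ⟨a, ha, hxa⟩ := hxi
    obtain ⟨b, hb, hxb⟩ := hxj
    apply hij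
    rw [← ha, ← hb]
    exact Quotient.sound (EqvGen.rel _ _ ⟨x, hxa, hxb⟩)
  · -- covers
    apply eq_univ_of_forall
    intro x
    obtain ⟨a, hxa⟩ : ∃ a, x ∈ U a := by
      have := hUc ▸ mem_univ x; simpa using this
    exact mem_iUnion.2 ⟨Quotient.mk sd a, mem_iUnion.2 ⟨a, mem_iUnion.2 ⟨rfl, hxa⟩⟩⟩
  · -- each piece σ-compact
    intro i
    set Y : Set T := ⋃ (a : T) (_ : Quotient.mk sd a = i), U a with hY
    have hsat : ∀ b, (U b ∩ Y).Nonempty → Quotient.mk sd b = i := by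
      rintro b ⟨x, hxb, hxY⟩
      simp only [hY, mem_iUnion] at hxY
      obtain ⟨a, ha, hxa⟩ := hxY
      rw [← ha]
      exact Quotient.sound (EqvGen.rel _ _ ⟨x, hxb, hxa⟩)
    have hYclosed : IsClosed Y := by
      rw [← isOpen_compl_iff]
      have : Yᶜ = ⋃ (b : T) (_ : ¬ Quotient.mk sd b = i), U b := by
        apply Subset.antisymm
        · intro x hx
          obtain ⟨b, hxb⟩ : ∃ b, x ∈ U b := by
            have := hUc ▸ mem_univ x; simpa using this
          have hb : ¬ Quotient.mk sd b = i := by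
            intro hbi
            exact hx (mem_iUnion.2 ⟨b, mem_iUnion.2 ⟨hbi, hxb⟩⟩)
          exact mem_iUnion.2 ⟨b, mem_iUnion.2 ⟨hb, hxb⟩⟩
        · rintro x hx hxY
          simp only [mem_iUnion] at hx
          obtain ⟨b, hb, hxb⟩ := hx
          exact hb (hsat b ⟨x, hxb, hxY⟩)
      rw [this]
      exact isOpen_iUnion fun b => isOpen_iUnion fun _ => hUo b
    obtain ⟨a₀, ha₀⟩ : ∃ a₀, Quotient.mk sd a₀ = i := Quotient.exists_rep i
    -- the class of a₀ is countable
    set Sn : ℕ → Set T := fun n => Nat.rec {a₀} (fun _ Sn => {b | ∃ c ∈ Sn, r c b}) n with hSn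
    have hSfin : ∀ n, (Sn n).Finite := by
      intro n
      induction n with
      | zero => exact finite_singleton _
      | succ n ih =>
        have : Sn (n + 1) = ⋃ c ∈ Sn n, {b | r c b} := by
          ext b; simp [hSn]
        rw [this]
        refine ih.biUnion fun c _ => ?_
        refine (hUl.finite_nonempty_inter_compact (hUcl c)).subset ?_
        intro b hb
        obtain ⟨y, hyc, hyb⟩ := hb
        exact ⟨y, hyb, subset_closure hyc⟩
    set C : Set T := ⋃ n, Sn n with hC
    have hCstep : ∀ b ∈ C, ∀ c, r b c → c ∈ C := by
      rintro b hb c hbc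
      obtain ⟨n, hn⟩ := mem_iUnion.1 hb
      exact mem_iUnion.2 ⟨n + 1, ⟨b, hn, hbc⟩⟩
    have hCiff : ∀ b c, EqvGen r b c → (b ∈ C ↔ c ∈ C) := by
      intro b c h
      induction h with
      | rel x y hxy => exact ⟨fun hx => hCstep x hx y hxy, fun hy => hCstep y hy x (hrsymm _ _ hxy)⟩
      | refl x => exact Iff.rfl
      | symm x y _ ih => exact ih.symm
      | trans x y z _ _ ih1 ih2 => exact ih1.trans ih2
    have hclsC : {a | Quotient.mk sd a = i} ⊆ C := by
      intro b hb
      have hba : EqvGen r b a₀ := Quotient.exact (hb.trans ha₀.symm)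
      exact (hCiff b a₀ hba).2 (mem_iUnion.2 ⟨0, rfl⟩)
    have hclscount : {a | Quotient.mk sd a = i}.Countable :=
      (countable_iUnion fun n => (hSfin n).countable).mono hclsC
    obtain ⟨e, he⟩ := hclscount.exists_eq_range ⟨a₀, ha₀⟩
    have hYeq : Y = ⋃ n, closure (U (e n)) := by
      apply Subset.antisymm
      · intro x hx
        simp only [hY, mem_iUnion] at hx
        obtain ⟨a, ha, hxa⟩ := hx
        have : a ∈ range e := he ▸ ha
        obtain ⟨n, rfl⟩ := this
        exact mem_iUnion.2 ⟨n, subset_closure hxa⟩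
      · refine iUnion_subset fun n => ?_
        have hen : Quotient.mk sd (e n) = i := by
          have : e n ∈ {a | Quotient.mk sd a = i} := he ▸ mem_range_self n
          exact this
        refine closure_minimal ?_ hYclosed
        exact subset_iUnion_of_subset (e n) (by simp [hen])
    exact ⟨fun n => closure (U (e n)), fun n => hUcl (e n), hYeq⟩

end P


section Coz

variable {T : Type*} [TopologicalSpace T] [CompactSpace T] [T2Space T]

/-- A σ-compact open subset of a compact Hausdorff space is the cozero set of a nonnegative
continuous real function. -/
theorem exists_nonneg_cozero {Z : Set T} (hZ : IsOpen Z) (K : ℕ → Set T)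
    (hK : ∀ n, IsCompact (K n)) (hZK : Z = ⋃ n, K n) :
    ∃ g : C(T, ℝ), (∀ p, 0 ≤ g p) ∧ {p | g p ≠ 0} = Z := by
  have hKZ : ∀ n, K n ⊆ Z := fun n => hZK ▸ subset_iUnion K n
  have hf : ∀ n : ℕ, ∃ f : C(T, ℝ), EqOn f 0 Zᶜ ∧ EqOn f 1 (K n) ∧ ∀ x, f x ∈ Icc (0:ℝ) 1 := by
    intro n
    exact exists_continuous_zero_one_of_isClosed (isClosed_compl_iff.2 hZ) (hK n).isClosed
      (disjoint_left.2 fun p hp hpK => hp (hKZ n hpK))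
  choose f h0 h1 h01 using hf
  set F : ℕ → (T →ᵇ ℝ) := fun n => mkOfCompact (f n) with hF
  have hnorm : ∀ n, ‖F n‖ ≤ 1 := by
    intro n
    rw [norm_le zero_le_one]
    intro x
    rw [Real.norm_eq_abs, abs_le]
    simp only [hF, mkOfCompact_apply]
    exact ⟨by linarith [(h01 n x).1], (h01 n x).2⟩
  have hgeo : Summable (fun n : ℕ => (2⁻¹:ℝ)^(n+1)) := by
    have h := summable_geometric_of_lt_one (r := (2⁻¹:ℝ)) (by norm_num) (by norm_num)
    exact (h.mul_left 2⁻¹).congr fun n => by ring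
  have hsumm : Summable (fun n : ℕ => (2⁻¹ : ℝ)^(n+1) • F n) := by
    apply Summable.of_norm_bounded (g := fun n : ℕ => (2⁻¹ : ℝ)^(n+1)) hgeo
    intro n
    show ‖(2⁻¹ : ℝ)^(n+1) • F n‖ ≤ (2⁻¹:ℝ)^(n+1)
    have hns : ‖(2⁻¹ : ℝ)^(n+1) • F n‖ = ‖(2⁻¹:ℝ)^(n+1)‖ * ‖F n‖ := norm_smul (β := T →ᵇ ℝ) _ _
    rw [hns]
    calc ‖(2⁻¹:ℝ)^(n+1)‖ * ‖F n‖ ≤ ‖(2⁻¹:ℝ)^(n+1)‖ * 1 :=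
          mul_le_mul_of_nonneg_left (hnorm n) (norm_nonneg _)
      _ = (2⁻¹:ℝ)^(n+1) := by
          rw [mul_one, Real.norm_eq_abs, abs_of_nonneg (by positivity)]
  set G : T →ᵇ ℝ := ∑' n, (2⁻¹ : ℝ)^(n+1) • F n with hG
  have happ : ∀ p, G p = ∑' n, (2⁻¹ : ℝ)^(n+1) * f n p := by
    intro p
    have h2 := hsumm.map_tsum (BoundedContinuousFunction.evalCLM (β := ℝ) ℝ p).toLinearMap.toAddMonoidHom
      (BoundedContinuousFunction.evalCLM (β := ℝ) ℝ p).continuous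
    rw [hG]
    calc (∑' n, (2⁻¹ : ℝ)^(n+1) • F n) p
        = (BoundedContinuousFunction.evalCLM (β := ℝ) ℝ p).toLinearMap.toAddMonoidHom
            (∑' n, (2⁻¹ : ℝ)^(n+1) • F n) := rfl
      _ = ∑' n, (2⁻¹ : ℝ)^(n+1) * f n p := by rw [h2]; exact tsum_congr fun n => rfl
  have hsummp : ∀ p, Summable (fun n : ℕ => (2⁻¹ : ℝ)^(n+1) * f n p) := by
    intro p
    have h2 := hsumm.map (BoundedContinuousFunction.evalCLM (β := ℝ) ℝ p).toLinearMap.toAddMonoidHom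
      (BoundedContinuousFunction.evalCLM (β := ℝ) ℝ p).continuous
    exact h2.congr fun n => rfl
  refine ⟨G.toContinuousMap, ?_, ?_⟩
  · intro p
    show (0:ℝ) ≤ G p
    rw [happ]
    exact tsum_nonneg fun n => mul_nonneg (by positivity) (h01 n p).1
  · ext p
    simp only [mem_setOf_eq, ContinuousMap.coe_mk, BoundedContinuousFunction.coe_toContinuousMap]
    constructor
    · intro hgp
      by_contra hpZ
      apply hgp
      show G p = 0
      rw [happ]
      have hz : ∀ n : ℕ, (2⁻¹ : ℝ)^(n+1) * f n p = 0 := by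
        intro n
        have : f n p = 0 := h0 n hpZ
        rw [this, mul_zero]
      rw [tsum_congr hz, tsum_zero]
    · intro hpZ
      obtain ⟨n₀, hn₀⟩ : ∃ n, p ∈ K n := by
        have := hZK ▸ hpZ; simpa using this
      have hpos : 0 < G p := by
        rw [happ]
        refine Summable.tsum_pos (hsummp p) (fun n => mul_nonneg (by positivity) (h01 n p).1) n₀ ?_
        have he : f n₀ p = 1 := h1 n₀ hn₀
        rw [he, mul_one]
        positivity
      exact ne_of_gt hpos

end Coz

section Piecewise

variable {S E : Type*} [TopologicalSpace S] [TopologicalSpace E] [Zero E]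

open Classical in
/-- Piecewise function: continuous function on an open set `Z` which is closed in an ambient
set `Λ`, extended by zero, is continuous provided a "support" condition. -/
theorem continuous_piecewise_zero {Λ Z : Set S} {φ : S → ℝ} {d : S → E}
    (hZopen : IsOpen Z)
    (hZcl : ∀ p ∈ Λ, p ∉ Z → ∃ O, IsOpen O ∧ p ∈ O ∧ O ∩ Z = ∅)
    (hφ : Continuous φ) (hsupp : closure {p | φ p ≠ 0} ⊆ Λ)
    (hd : ContinuousOn d Z) (hd0 : ∀ p ∈ Z, φ p = 0 → d p = 0) :
    Continuous (fun p => if p ∈ Z then d p else 0) := by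
  rw [continuous_iff_continuousAt]
  intro p
  by_cases hpZ : p ∈ Z
  · have hc : ContinuousAt d p := hd.continuousAt (hZopen.mem_nhds hpZ)
    refine ContinuousAt.congr hc ?_
    filter_upwards [hZopen.mem_nhds hpZ] with q hq
    rw [if_pos hq]
  · by_cases hps : p ∈ closure {p | φ p ≠ 0}
    · obtain ⟨O, hO, hpO, hOZ⟩ := hZcl p (hsupp hps) hpZ
      refine ContinuousAt.congr (continuousAt_const (y := (0:E))) ?_
      filter_upwards [hO.mem_nhds hpO] with q hq
      have hqZ : q ∉ Z := fun hqZ => (eq_empty_iff_forall_notMem.1 hOZ q ⟨hq, hqZ⟩)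
      rw [if_neg hqZ]
    · refine ContinuousAt.congr (continuousAt_const (y := (0:E))) ?_
      filter_upwards [(isClosed_closure (s := {p | φ p ≠ 0})).isOpen_compl.mem_nhds hps]
        with q hq
      by_cases hqZ : q ∈ Z
      · rw [if_pos hqZ]
        have hφq : φ q = 0 := by
          by_contra hne
          exact hq (subset_closure hne)
        exact (hd0 q hqZ hφq).symm
      · rw [if_neg hqZ]

end Piecewise

section Extra
variable {X : Type*} [TopologicalSpace X] {𝕜 : Type*} [RCLike 𝕜]

theorem betaExt_eq {f : X →ᵇ 𝕜} {g : StoneCech X → 𝕜} (hg : Continuous g)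
    (h : ∀ x, g (stoneCechUnit x) = f x) : betaExt f = g := by
  refine Continuous.ext_on denseRange_stoneCechUnit (continuous_betaExt f) hg ?_
  rintro - ⟨x, rfl⟩
  rw [betaExt_unit, h]

theorem betaExt_norm_le (f : X →ᵇ 𝕜) (p : StoneCech X) : ‖betaExt f p‖ ≤ ‖f‖ := by
  haveI : CompactSpace (Metric.closedBall (0 : 𝕜) ‖f‖) :=
    isCompact_iff_compactSpace.mp (isCompact_closedBall 0 ‖f‖)
  have h2 := (stoneCechExtend (betaExt_aux f) p).2
  rw [Metric.mem_closedBall, dist_zero_right] at h2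
  exact h2

theorem betaExt_add (f g : X →ᵇ 𝕜) : betaExt (f + g) = betaExt f + betaExt g := by
  refine betaExt_eq ((continuous_betaExt f).add (continuous_betaExt g)) fun x => ?_
  simp [betaExt_unit]

theorem betaExt_mul (f g : X →ᵇ 𝕜) : betaExt (f * g) = betaExt f * betaExt g := by
  refine betaExt_eq (((continuous_betaExt f).mul (continuous_betaExt g))) fun x => ?_
  simp [betaExt_unit]

theorem betaExt_star (f : X →ᵇ 𝕜) : betaExt (star f) = fun p => star (betaExt f p) := by
  refine betaExt_eq (continuous_star.comp (continuous_betaExt f)) fun x => ?_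
  simp [betaExt_unit]

theorem betaExt_sub (f g : X →ᵇ 𝕜) : betaExt (f - g) = betaExt f - betaExt g := by
  refine betaExt_eq ((continuous_betaExt f).sub (continuous_betaExt g)) fun x => ?_
  simp [betaExt_unit]

theorem betaExt_sum {ι : Type*} (t : Finset ι) (f : ι → (X →ᵇ 𝕜)) :
    betaExt (∑ i ∈ t, f i) = fun p => ∑ i ∈ t, betaExt (f i) p := by
  refine betaExt_eq (by exact continuous_finset_sum t fun i _ => continuous_betaExt (f i))
    fun x => ?_
  simp [betaExt_unit]

theorem isOpen_lambdaSet (G : Ideal (X →ᵇ 𝕜)) : IsOpen (lambdaSet G) := by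
  refine isOpen_biUnion fun g _ => ?_
  exact isOpen_compl_iff.mpr ((isClosed_singleton (x := (0:𝕜))).preimage (continuous_betaExt g))

theorem coz_subset_lambdaSet {G : Ideal (X →ᵇ 𝕜)} {g : X →ᵇ 𝕜} (hg : g ∈ G) :
    {p | betaExt g p ≠ 0} ⊆ lambdaSet G :=
  subset_biUnion_of_mem (u := fun g => {p | betaExt g p ≠ 0}) hg

noncomputable def restrBCF (q : C(StoneCech X, 𝕜)) : X →ᵇ 𝕜 :=
  (mkOfCompact q).compContinuous ⟨stoneCechUnit, continuous_stoneCechUnit⟩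

@[simp] theorem restrBCF_apply (q : C(StoneCech X, 𝕜)) (x : X) :
    restrBCF q x = q (stoneCechUnit x) := rfl

theorem betaExt_restrBCF (q : C(StoneCech X, 𝕜)) : betaExt (restrBCF q) = q :=
  betaExt_eq q.continuous fun _ => rfl

end Extra

section MemLemma
variable {X : Type*} [TopologicalSpace X] {𝕜 : Type*} [RCLike 𝕜]

open RCLike

/-- Membership criterion for a closed ideal: `f ∈ H` iff the cozero set of `f_β` is contained
in `λ_H X`. -/
theorem mem_of_coz_subset {H : Ideal (X →ᵇ 𝕜)} (hcl : IsClosed (H : Set (X →ᵇ 𝕜))) {f : X →ᵇ 𝕜}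
    (hsub : {p | betaExt f p ≠ 0} ⊆ lambdaSet H) : f ∈ H := by
  have key : ∀ ε : ℝ, 0 < ε → ∃ y ∈ H, ‖f - y‖ ≤ ε := by
    intro ε hε
    set K : Set (StoneCech X) := {p | ε ≤ ‖betaExt f p‖} with hKdef
    have hKclosed : IsClosed K :=
      isClosed_le continuous_const (continuous_betaExt f).norm
    have hKcomp : IsCompact K := hKclosed.isCompact
    have hKΛ : K ⊆ lambdaSet H := by
      intro p hp
      apply hsub
      intro h0
      rw [mem_setOf_eq, h0, norm_zero] at hp
      linarith
    -- finite subcover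
    have hcover : K ⊆ ⋃ g : {g : X →ᵇ 𝕜 // g ∈ H}, {p | betaExt g.1 p ≠ 0} := by
      intro p hp
      have := hKΛ hp
      simp only [lambdaSet, mem_iUnion] at this
      obtain ⟨g, hg, hgp⟩ := this
      exact mem_iUnion.2 ⟨⟨g, hg⟩, hgp⟩
    obtain ⟨t, ht⟩ := hKcomp.elim_finite_subcover _
      (fun g : {g : X →ᵇ 𝕜 // g ∈ H} =>
        isOpen_compl_iff.mpr ((isClosed_singleton (x := (0:𝕜))).preimage (continuous_betaExt g.1)))
      hcover
    set s : X →ᵇ 𝕜 := ∑ g ∈ t, g.1 * star g.1 with hs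
    have hsH : s ∈ H := Ideal.sum_mem H fun g _ => Ideal.mul_mem_right _ H g.2
    set σ : X → ℝ := fun x => ∑ g ∈ t, ‖g.1 x‖^2 with hσ
    have hσcont : Continuous σ :=
      continuous_finset_sum t fun g _ => (g.1.continuous.norm).pow 2
    have hσnonneg : ∀ x, 0 ≤ σ x := fun x =>
      Finset.sum_nonneg fun g _ => sq_nonneg _
    have hsx : ∀ x, s x = ((σ x : ℝ) : 𝕜) := by
      intro x
      rw [hs, BoundedContinuousFunction.sum_apply, hσ, RCLike.ofReal_sum]
      refine Finset.sum_congr rfl fun g _ => ?_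
      rw [BoundedContinuousFunction.mul_apply, BoundedContinuousFunction.star_apply]
      rw [RCLike.star_def, RCLike.mul_conj]
      norm_cast
    set Fσ : StoneCech X → ℝ := fun p => ∑ g ∈ t, ‖betaExt g.1 p‖^2 with hFσ
    have hFσcont : Continuous Fσ :=
      continuous_finset_sum t fun g _ => ((continuous_betaExt g.1).norm).pow 2
    have hFσunit : ∀ x, Fσ (stoneCechUnit x) = σ x := by
      intro x
      refine Finset.sum_congr rfl fun g _ => by rw [betaExt_unit]
    have hFσpos : ∀ p ∈ K, 0 < Fσ p := by
      intro p hp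
      have := ht hp
      simp only [mem_iUnion] at this
      obtain ⟨g, hgt, hgp⟩ := this
      refine Finset.sum_pos' (fun g _ => sq_nonneg _) ⟨g, hgt, ?_⟩
      have : (0:ℝ) < ‖betaExt g.1 p‖ := norm_pos_iff.2 hgp
      positivity
    -- a positive lower bound on K
    obtain ⟨c, hc0, hcK⟩ : ∃ c : ℝ, 0 < c ∧ ∀ x : X, stoneCechUnit x ∈ K → c ≤ σ x := by
      by_cases hK : K.Nonempty
      · obtain ⟨p₀, hp₀K, hp₀min⟩ := hKcomp.exists_isMinOn hK hFσcont.continuousOn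
        refine ⟨Fσ p₀, hFσpos p₀ hp₀K, fun x hx => ?_⟩
        rw [← hFσunit]
        exact hp₀min hx
      · exact ⟨1, one_pos, fun x hx => absurd ⟨_, hx⟩ hK⟩
    by_cases hf0 : ‖f‖ = 0
    · refine ⟨0, H.zero_mem, ?_⟩
      rw [sub_zero, hf0]
      exact le_of_lt hε
    have hfpos : 0 < ‖f‖ := lt_of_le_of_ne (norm_nonneg f) (Ne.symm hf0)
    set δ : ℝ := ε * c / ‖f‖ with hδ
    have hδpos : 0 < δ := by positivity
    have hδσ : ∀ x, 0 < δ + σ x := fun x => by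
      have := hσnonneg x; linarith
    -- the multiplier
    set w : X →ᵇ 𝕜 := BoundedContinuousFunction.ofNormedAddCommGroup
      (fun x => (((δ + σ x)⁻¹ : ℝ) : 𝕜))
      (RCLike.continuous_ofReal.comp ((continuous_const.add hσcont).inv₀
        (fun x => ne_of_gt (hδσ x)))) δ⁻¹
      (by
        intro x
        rw [RCLike.norm_ofReal, abs_of_nonneg (le_of_lt (inv_pos.2 (hδσ x)))]
        exact inv_anti₀ hδpos (by have := hσnonneg x; linarith)) with hw
    refine ⟨s * (f * w), Ideal.mul_mem_right _ H hsH, ?_⟩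
    rw [BoundedContinuousFunction.norm_le (le_of_lt hε)]
    intro x
    have hwx : w x = (((δ + σ x)⁻¹ : ℝ) : 𝕜) := rfl
    have hcalc : f x - (s * (f * w)) x = f x * ((δ / (δ + σ x) : ℝ) : 𝕜) := by
      rw [BoundedContinuousFunction.mul_apply, BoundedContinuousFunction.mul_apply,
        hsx x, hwx]
      have h1 : (1 : ℝ) - σ x * (δ + σ x)⁻¹ = δ / (δ + σ x) := by
        have hne := (hδσ x).ne'
        rw [← div_eq_mul_inv, eq_div_iff hne, sub_mul, div_mul_cancel₀ _ hne]; ring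
      calc f x - (σ x : 𝕜) * (f x * ((δ + σ x)⁻¹ : ℝ))
          = f x * (1 - ((σ x * (δ + σ x)⁻¹ : ℝ) : 𝕜)) := by push_cast; ring
        _ = f x * ((δ / (δ + σ x) : ℝ) : 𝕜) := by rw [← h1]; push_cast; ring
    rw [BoundedContinuousFunction.sub_apply, hcalc, norm_mul, RCLike.norm_ofReal,
      abs_of_nonneg (le_of_lt (div_pos hδpos (hδσ x)))]
    by_cases hx : ε ≤ ‖f x‖
    · -- x lands in K
      have hxK : stoneCechUnit x ∈ K := by
        rw [hKdef, mem_setOf_eq, betaExt_unit]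
        exact hx
      have hσc : c ≤ σ x := hcK x hxK
      calc ‖f x‖ * (δ / (δ + σ x)) ≤ ‖f‖ * (δ / (δ + c)) := by
            refine mul_le_mul (f.norm_coe_le_norm x) ?_
              (le_of_lt (div_pos hδpos (hδσ x))) (norm_nonneg f)
            exact div_le_div_of_nonneg_left (le_of_lt hδpos) (by linarith) (by linarith)
        _ ≤ ‖f‖ * (δ / c) := by
            refine mul_le_mul_of_nonneg_left ?_ (norm_nonneg f)
            exact div_le_div_of_nonneg_left (le_of_lt hδpos) hc0 (by linarith)
        _ = ε := by
            rw [hδ]; field_simp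
    · push_neg at hx
      calc ‖f x‖ * (δ / (δ + σ x)) ≤ ‖f x‖ * 1 := by
            refine mul_le_mul_of_nonneg_left ?_ (norm_nonneg _)
            rw [div_le_one (hδσ x)]
            have := hσnonneg x; linarith
        _ ≤ ε := by rw [mul_one]; exact le_of_lt hx
  -- conclude via closedness
  have : f ∈ closure (H : Set (X →ᵇ 𝕜)) := by
    rw [Metric.mem_closure_iff]
    intro ε hε
    obtain ⟨y, hyH, hy⟩ := key (ε/2) (by linarith)
    refine ⟨y, hyH, ?_⟩
    rw [dist_eq_norm]
    calc ‖f - y‖ ≤ ε/2 := hy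
      _ < ε := by linarith
  rwa [hcl.closure_eq] at this

end MemLemma

universe u

/-- For a Tychonoff space `X` and a non-vanishing closed ideal `H` of `C_B(X)`: `sp(H)` is
paracompact iff `H` is the closure in `C_B(X)` of an internal direct sum `⨁_{i∈I} ⟨h_i⟩` of
principal ideals generated by elements `h_i` of `C_B(X)`. -/
theorem spectrum_paracompact_iff {X : Type u} [TopologicalSpace X] [T35Space X]
    {𝕜 : Type*} [RCLike 𝕜] (H : Ideal (X →ᵇ 𝕜))
    (hcl : IsClosed (H : Set (X →ᵇ 𝕜))) (hnv : ∀ x : X, ∃ h ∈ H, h x ≠ 0) :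
    ParacompactSpace (lambdaSet H) ↔
      ∃ (I : Type u) (h : I → (X →ᵇ 𝕜)),
        (∀ i₀ : I, Ideal.span {h i₀} ⊓
            (⨆ i ∈ {i : I | i ≠ i₀}, (Ideal.span {h i} : Ideal (X →ᵇ 𝕜))) = ⊥) ∧
        (H : Set (X →ᵇ 𝕜)) =
          closure ((⨆ i, Ideal.span {h i} : Ideal (X →ᵇ 𝕜)) : Set (X →ᵇ 𝕜)) := by
  classical
  constructor
  · -- forward direction
    intro hpc
    set Λ : Set (StoneCech X) := lambdaSet H with hΛdef
    have hΛopen : IsOpen Λ := isOpen_lambdaSet H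
    haveI : LocallyCompactSpace ↥Λ := hΛopen.isLocallyClosed.locallyCompactSpace
    obtain ⟨I, Y, hYopen, hYdisj, hYcover, hYsig⟩ := exists_disjoint_sigmaCompact_cover ↥Λ
    set Z : I → Set (StoneCech X) := fun i => Subtype.val '' Y i with hZdef
    have hZopen : ∀ i, IsOpen (Z i) := fun i => hΛopen.isOpenMap_subtype_val _ (hYopen i)
    have hZΛ : ∀ i, Z i ⊆ Λ := by
      rintro i p ⟨q, _, rfl⟩; exact q.2
    have hZdisj : ∀ i j, i ≠ j → ∀ p, p ∈ Z i → p ∈ Z j → False := by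
      intro i j hij p hpi hpj
      obtain ⟨q, hq, rfl⟩ := hpi
      obtain ⟨q', hq', hqq⟩ := hpj
      have hq'' : q' = q := Subtype.ext hqq
      subst hq''
      exact (hYdisj hij).le_bot ⟨hq, hq'⟩
    have hZcover : ⋃ i, Z i = Λ := by
      rw [hZdef, ← image_iUnion, hYcover, image_univ, Subtype.range_coe]
    have hcoz : ∀ i, ∃ g : C(StoneCech X, ℝ), (∀ p, 0 ≤ g p) ∧ {p | g p ≠ 0} = Z i := by
      intro i
      obtain ⟨K, hK, hYK⟩ := hYsig i
      refine exists_nonneg_cozero (hZopen i) (fun n => Subtype.val '' K n)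
        (fun n => (hK n).image continuous_subtype_val) ?_
      rw [hZdef]
      show Subtype.val '' Y i = _
      rw [hYK, image_iUnion]
    choose g hgpos hgcoz using hcoz
    set h : I → (X →ᵇ 𝕜) := fun i => restrBCF ⟨fun p => ((g i p : ℝ) : 𝕜),
      RCLike.continuous_ofReal.comp (g i).continuous⟩ with hhdef
    have hβ : ∀ i, betaExt (h i) = fun p => ((g i p : ℝ) : 𝕜) := fun i => betaExt_restrBCF _
    have hcozh : ∀ i, {p | betaExt (h i) p ≠ 0} = Z i := by
      intro i
      rw [hβ i, ← hgcoz i]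
      ext p
      simp [RCLike.ofReal_eq_zero]
    have hspan_coz : ∀ (i : I) (f : X →ᵇ 𝕜), f ∈ Ideal.span {h i} →
        ∀ p, betaExt f p ≠ 0 → p ∈ Z i := by
      intro i f hf p hp
      rw [Ideal.mem_span_singleton'] at hf
      obtain ⟨u, hu⟩ := hf
      rw [← hu, betaExt_mul] at hp
      have hne : betaExt (h i) p ≠ 0 := by
        intro h0
        apply hp
        show betaExt u p * betaExt (h i) p = 0
        rw [h0, mul_zero]
      rw [← hcozh i]
      exact hne
    refine ⟨I, h, ?_, ?_⟩
    · -- directness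
      intro i₀
      rw [eq_bot_iff]
      intro f hf
      rw [Submodule.mem_inf] at hf
      obtain ⟨hf1, hf2⟩ := hf
      have hfZ : ∀ p, betaExt f p ≠ 0 → p ∈ Z i₀ := hspan_coz i₀ f hf1
      rw [iSup_subtype'] at hf2
      have hfZ' : {p | betaExt f p ≠ 0} ⊆ ⋃ i : {i : I // i ∈ {i : I | i ≠ i₀}}, Z i.1 := by
        refine Submodule.iSup_induction
          (p := fun i : {i : I // i ∈ {i : I | i ≠ i₀}} => (Ideal.span {h i.1} : Ideal (X →ᵇ 𝕜)))
          (motive := fun f => {p | betaExt f p ≠ 0} ⊆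
            ⋃ i : {i : I // i ∈ {i : I | i ≠ i₀}}, Z i.1) hf2 ?_ ?_ ?_
        · intro i x hx p hp
          exact mem_iUnion.2 ⟨i, hspan_coz i.1 x hx p hp⟩
        · intro p hp
          exfalso
          apply hp
          show betaExt (0 : X →ᵇ 𝕜) p = 0
          have : betaExt (0 : X →ᵇ 𝕜) = fun _ => (0:𝕜) :=
            betaExt_eq continuous_const fun x => rfl
          rw [this]
        · intro a b ha hb p hp
          have : betaExt (a + b) p = betaExt a p + betaExt b p := by rw [betaExt_add]; rfl
          rw [mem_setOf_eq, this] at hp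
          by_cases hap : betaExt a p ≠ 0
          · exact ha hap
          · push_neg at hap
            refine hb ?_
            intro hbp
            rw [hap, hbp, add_zero] at hp
            exact hp rfl
      have hzero : ∀ p, betaExt f p = 0 := by
        intro p
        by_contra hp
        have h1 : p ∈ Z i₀ := hfZ p hp
        obtain ⟨i, hi⟩ := mem_iUnion.1 (hfZ' hp)
        exact hZdisj i.1 i₀ i.2 p hi h1
      have : f = 0 := by
        ext x
        have := hzero (stoneCechUnit x)
        rw [betaExt_unit] at this
        simpa using this
      rw [this]
      exact Submodule.zero_mem ⊥
    · -- H = closure of the sup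
      set J : Ideal (X →ᵇ 𝕜) := ⨆ i, Ideal.span {h i} with hJdef
      have hhiH : ∀ i, h i ∈ H := by
        intro i
        refine mem_of_coz_subset hcl ?_
        rw [hcozh i]
        exact hZΛ i
      apply Subset.antisymm
      · -- H ⊆ closure J
        intro f hf
        have hfH : f ∈ H := hf
        rw [Metric.mem_closure_iff]
        intro ε hε
        set ε' : ℝ := ε / 2 with hε'def
        have hε' : 0 < ε' := by positivity
        set K : Set (StoneCech X) := {p | ε' ≤ ‖betaExt f p‖} with hKdef
        have hKclosed : IsClosed K := isClosed_le continuous_const (continuous_betaExt f).norm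
        have hKcomp : IsCompact K := hKclosed.isCompact
        have hKU : K ⊆ ⋃ i, Z i := by
          intro p hp
          rw [hZcover]
          refine coz_subset_lambdaSet hfH ?_
          intro h0
          rw [mem_setOf_eq, h0, norm_zero] at hp
          linarith
        obtain ⟨t, ht⟩ := hKcomp.elim_finite_subcover Z hZopen hKU
        set U : Set (StoneCech X) := ⋃ i ∈ t, Z i with hUdef
        have hUopen : IsOpen U := isOpen_biUnion fun i _ => hZopen i
        obtain ⟨V, hVopen, hKV, hVU⟩ := normal_exists_closure_subset hKclosed hUopen ht
        obtain ⟨φ, hφ0, hφ1, hφ01⟩ := exists_continuous_zero_one_of_isClosed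
          (isClosed_compl_iff.2 hVopen) hKclosed
          (disjoint_left.2 fun p hp hpK => hp (hKV hpK))
        have hφV : {p | φ p ≠ 0} ⊆ V := by
          intro p hp
          by_contra hpV
          exact hp (hφ0 hpV)
        have hφsupp : closure {p | φ p ≠ 0} ⊆ U := (closure_mono hφV).trans hVU
        have hUΛ : U ⊆ Λ := iUnion₂_subset fun i _ => hZΛ i
        have hsuppΛ : closure {p | φ p ≠ 0} ⊆ Λ := hφsupp.trans hUΛ
        have hZclΛ : ∀ k, ∀ p ∈ Λ, p ∉ Z k →
            ∃ O, IsOpen O ∧ p ∈ O ∧ O ∩ Z k = ∅ := by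
          intro k p hpΛ hpZ
          rw [← hZcover] at hpΛ
          obtain ⟨j, hj⟩ := mem_iUnion.1 hpΛ
          have hjk : j ≠ k := fun e => hpZ (e ▸ hj)
          exact ⟨Z j, hZopen j, hj, eq_empty_iff_forall_notMem.2
            fun q hq => hZdisj j k hjk q hq.1 hq.2⟩
        set φk : I → StoneCech X → ℝ := fun k p => if p ∈ Z k then φ p else 0 with hφkdef
        have hφkcont : ∀ k, Continuous (φk k) := fun k =>
          continuous_piecewise_zero (hZopen k) (hZclΛ k) φ.continuous hsuppΛ
            φ.continuous.continuousOn (fun p _ hp => hp)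
        set uk : I → StoneCech X → 𝕜 := fun k p =>
          if p ∈ Z k then betaExt f p * ((φ p : ℝ) : 𝕜) * (((g k p : ℝ) : 𝕜))⁻¹ else 0
          with hukdef
        have hgne : ∀ k, ∀ p ∈ Z k, ((g k p : ℝ) : 𝕜) ≠ 0 := by
          intro k p hp
          rw [Ne, RCLike.ofReal_eq_zero]
          have : p ∈ {q | g k q ≠ 0} := by rw [hgcoz k]; exact hp
          exact this
        have hukcont : ∀ k, Continuous (uk k) := by
          intro k
          refine continuous_piecewise_zero (hZopen k) (hZclΛ k) φ.continuous hsuppΛ ?_ ?_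
          · refine ContinuousOn.mul (Continuous.continuousOn ?_) ?_
            · exact (continuous_betaExt f).mul (RCLike.continuous_ofReal.comp φ.continuous)
            · exact ContinuousOn.inv₀
                (Continuous.continuousOn (RCLike.continuous_ofReal.comp (g k).continuous))
                (hgne k)
          · intro p _ hφp
            rw [hφp]
            simp
        have hid : ∀ k, ∀ p, uk k p * ((g k p : ℝ) : 𝕜) =
            betaExt f p * ((φk k p : ℝ) : 𝕜) := by
          intro k p
          by_cases hp : p ∈ Z k
          · show (if p ∈ Z k then betaExt f p * ((φ p : ℝ) : 𝕜) * (((g k p : ℝ) : 𝕜))⁻¹ else 0)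
              * ((g k p : ℝ) : 𝕜) = betaExt f p * ((φk k p : ℝ) : 𝕜)
            rw [if_pos hp]
            show _ = betaExt f p * (((if p ∈ Z k then φ p else 0 : ℝ)) : 𝕜)
            rw [if_pos hp]
            rw [mul_assoc, inv_mul_cancel₀ (hgne k p hp), mul_one]
          · show (if p ∈ Z k then betaExt f p * ((φ p : ℝ) : 𝕜) * (((g k p : ℝ) : 𝕜))⁻¹ else 0)
              * ((g k p : ℝ) : 𝕜) = betaExt f p * ((φk k p : ℝ) : 𝕜)
            rw [if_neg hp]
            show _ = betaExt f p * (((if p ∈ Z k then φ p else 0 : ℝ)) : 𝕜)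
            rw [if_neg hp]
            simp
        set fk : I → (X →ᵇ 𝕜) := fun k => f * restrBCF ⟨fun p => ((φk k p : ℝ) : 𝕜),
          RCLike.continuous_ofReal.comp (hφkcont k)⟩ with hfkdef
        have hfkspan : ∀ k, fk k ∈ Ideal.span {h k} := by
          intro k
          rw [Ideal.mem_span_singleton']
          refine ⟨restrBCF ⟨uk k, hukcont k⟩, ?_⟩
          ext x
          show uk k (stoneCechUnit x) * ((g k (stoneCechUnit x) : ℝ) : 𝕜) =
            f x * ((φk k (stoneCechUnit x) : ℝ) : 𝕜)
          rw [hid k, betaExt_unit]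
        set y : X →ᵇ 𝕜 := ∑ k ∈ t, fk k with hydef
        have hyJ : y ∈ J := Ideal.sum_mem J fun k _ =>
          (le_iSup (fun i => Ideal.span {h i}) k) (hfkspan k)
        have hφsum : ∀ p, ∑ k ∈ t, φk k p = φ p := by
          intro p
          by_cases hp : φ p = 0
          · rw [hp]
            refine Finset.sum_eq_zero fun k _ => ?_
            show (if p ∈ Z k then φ p else 0) = 0
            by_cases h1 : p ∈ Z k
            · rw [if_pos h1, hp]
            · rw [if_neg h1]
          · have hpU : p ∈ U := hVU (subset_closure (hφV hp))
            obtain ⟨k₀, hk₀t, hpk₀⟩ : ∃ k ∈ t, p ∈ Z k := by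
              simpa using mem_iUnion₂.1 hpU
            rw [Finset.sum_eq_single k₀]
            · show (if p ∈ Z k₀ then φ p else 0) = φ p
              rw [if_pos hpk₀]
            · intro k _ hkne
              show (if p ∈ Z k then φ p else 0) = 0
              rw [if_neg (fun hpk => hZdisj k k₀ hkne p hpk hpk₀)]
            · intro hcon
              exact absurd hk₀t hcon
        refine ⟨y, hyJ, ?_⟩
        rw [dist_eq_norm]
        have hnormle : ‖f - y‖ ≤ ε' := by
          rw [BoundedContinuousFunction.norm_le (le_of_lt hε')]
          intro x
          have hyx : y x = f x * ((φ (stoneCechUnit x) : ℝ) : 𝕜) := by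
            rw [hydef, BoundedContinuousFunction.sum_apply]
            have : ∀ k ∈ t, fk k x = f x * ((φk k (stoneCechUnit x) : ℝ) : 𝕜) := by
              intro k _
              rfl
            rw [Finset.sum_congr rfl this, ← Finset.mul_sum, ← RCLike.ofReal_sum,
              hφsum (stoneCechUnit x)]
          rw [BoundedContinuousFunction.sub_apply, hyx]
          have hcalc2 : f x - f x * ((φ (stoneCechUnit x) : ℝ) : 𝕜) =
              f x * (((1 - φ (stoneCechUnit x) : ℝ)) : 𝕜) := by
            push_cast
            ring
          rw [hcalc2, norm_mul, RCLike.norm_ofReal]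
          have h01 := hφ01 (stoneCechUnit x)
          rw [abs_of_nonneg (by simp only [mem_Icc] at h01; linarith)]
          by_cases hx : ε' ≤ ‖f x‖
          · have hxK : stoneCechUnit x ∈ K := by
              rw [hKdef, mem_setOf_eq, betaExt_unit]
              exact hx
            have : φ (stoneCechUnit x) = 1 := hφ1 hxK
            rw [this]
            simp [le_of_lt hε']
          · push_neg at hx
            calc ‖f x‖ * (1 - φ (stoneCechUnit x)) ≤ ‖f x‖ * 1 := by
                  refine mul_le_mul_of_nonneg_left ?_ (norm_nonneg _)
                  simp only [mem_Icc] at h01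
                  linarith
              _ ≤ ε' := by rw [mul_one]; exact le_of_lt hx
        calc ‖f - y‖ ≤ ε' := hnormle
          _ < ε := by rw [hε'def]; linarith
      · -- closure J ⊆ H
        have hJH : J ≤ H := iSup_le fun i =>
          (Ideal.span_le).2 (singleton_subset_iff.2 (hhiH i))
        intro f hf
        have : f ∈ closure (H : Set (X →ᵇ 𝕜)) :=
          closure_mono (fun q hq => hJH hq) hf
        rwa [hcl.closure_eq] at this
  · -- backward direction
    rintro ⟨I, h, hdir, hHeq⟩
    set J : Ideal (X →ᵇ 𝕜) := ⨆ i, Ideal.span {h i} with hJdef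
    have hhiJ : ∀ i, h i ∈ J := fun i => (le_iSup (fun i => Ideal.span {h i}) i)
      (Ideal.subset_span (mem_singleton _))
    have hhiH : ∀ i, h i ∈ H := by
      intro i
      have : (h i) ∈ (H : Set (X →ᵇ 𝕜)) := by
        rw [hHeq]; exact subset_closure (hhiJ i)
      exact this
    set V : I → Set (StoneCech X) := fun i => {p | betaExt (h i) p ≠ 0} with hVdef
    have hVopen : ∀ i, IsOpen (V i) := fun i =>
      isOpen_compl_iff.mpr ((isClosed_singleton (x := (0:𝕜))).preimage (continuous_betaExt (h i)))
    have hVΛ : ∀ i, V i ⊆ lambdaSet H := fun i => coz_subset_lambdaSet (hhiH i)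
    have hspan_coz : ∀ (i : I) (f : X →ᵇ 𝕜), f ∈ Ideal.span {h i} →
        ∀ p, betaExt f p ≠ 0 → p ∈ V i := by
      intro i f hf p hp
      rw [Ideal.mem_span_singleton'] at hf
      obtain ⟨u, hu⟩ := hf
      rw [← hu, betaExt_mul] at hp
      intro h0
      apply hp
      show betaExt u p * betaExt (h i) p = 0
      rw [h0, mul_zero]
    have hJcoz : ∀ f : X →ᵇ 𝕜, f ∈ J → {p | betaExt f p ≠ 0} ⊆ ⋃ i, V i := by
      intro f hf
      refine Submodule.iSup_induction (p := fun i : I => (Ideal.span {h i} : Ideal (X →ᵇ 𝕜)))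
        (motive := fun f => {p | betaExt f p ≠ 0} ⊆ ⋃ i, V i) hf ?_ ?_ ?_
      · intro i x hx p hp
        exact mem_iUnion.2 ⟨i, hspan_coz i x hx p hp⟩
      · intro p hp
        exfalso
        apply hp
        show betaExt (0 : X →ᵇ 𝕜) p = 0
        have hz : betaExt (0 : X →ᵇ 𝕜) = fun _ => (0:𝕜) :=
          betaExt_eq continuous_const fun x => rfl
        rw [hz]
      · intro a b ha hb p hp
        have hab : betaExt (a + b) p = betaExt a p + betaExt b p := by rw [betaExt_add]; rfl
        rw [mem_setOf_eq, hab] at hp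
        by_cases hap : betaExt a p ≠ 0
        · exact ha hap
        · push_neg at hap
          refine hb ?_
          intro hbp
          rw [hap, hbp, add_zero] at hp
          exact hp rfl
    have hΛV : lambdaSet H = ⋃ i, V i := by
      apply Subset.antisymm
      · intro p hp
        simp only [lambdaSet, mem_iUnion] at hp
        obtain ⟨b, hbH, hbp⟩ := hp
        have hbC : b ∈ closure (J : Set (X →ᵇ 𝕜)) := by
          rw [← hHeq]; exact hbH
        rw [Metric.mem_closure_iff] at hbC
        obtain ⟨b', hb'J, hbb'⟩ := hbC ‖betaExt b p‖ (norm_pos_iff.2 hbp)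
        have hb'p : betaExt b' p ≠ 0 := by
          intro h0
          have hle : ‖betaExt (b - b') p‖ ≤ ‖b - b'‖ := betaExt_norm_le _ _
          rw [betaExt_sub] at hle
          have : ‖betaExt b p - betaExt b' p‖ ≤ ‖b - b'‖ := hle
          rw [h0, sub_zero] at this
          rw [dist_eq_norm] at hbb'
          linarith
        exact hJcoz b' hb'J hb'p
      · exact iUnion_subset fun i => hVΛ i
    have hVdisj : ∀ i j, i ≠ j → ∀ p, p ∈ V i → p ∈ V j → False := by
      intro i j hij p hpi hpj
      have hopen : IsOpen (V i ∩ V j) := (hVopen i).inter (hVopen j)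
      obtain ⟨x, hx⟩ := denseRange_stoneCechUnit.exists_mem_open hopen ⟨p, hpi, hpj⟩
      have hxi : h i x ≠ 0 := by
        have := hx.1
        rwa [hVdef, mem_setOf_eq, betaExt_unit] at this
      have hxj : h j x ≠ 0 := by
        have := hx.2
        rwa [hVdef, mem_setOf_eq, betaExt_unit] at this
      have hmem : h i * h j ∈ Ideal.span {h i} ⊓
          (⨆ i' ∈ {i' : I | i' ≠ i}, Ideal.span {h i'}) := by
        refine Submodule.mem_inf.2 ⟨?_, ?_⟩
        · rw [Ideal.mem_span_singleton']
          exact ⟨h j, mul_comm _ _⟩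
        · have h1 : h i * h j ∈ Ideal.span {h j} := Ideal.mem_span_singleton'.2 ⟨h i, rfl⟩
          have h2 : (Ideal.span {h j} : Ideal (X →ᵇ 𝕜)) ≤
              ⨆ i' ∈ {i' : I | i' ≠ i}, Ideal.span {h i'} :=
            le_iSup₂ (f := fun (i' : I) (_ : i' ∈ {i' : I | i' ≠ i}) =>
              (Ideal.span {h i'} : Ideal (X →ᵇ 𝕜))) j (Ne.symm hij)
          exact h2 h1
      rw [hdir i] at hmem
      have hzero : h i * h j = 0 := by rwa [Ideal.mem_bot] at hmem
      have : h i x * h j x = 0 := by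
        have := congrArg (fun q : X →ᵇ 𝕜 => q x) hzero
        simpa using this
      exact mul_ne_zero hxi hxj this
    have hVsig : ∀ i, ∃ K : ℕ → Set (StoneCech X),
        (∀ n, IsCompact (K n)) ∧ (∀ n, K n ⊆ V i) ∧ V i = ⋃ n, K n := by
      intro i
      have hKsub : ∀ n : ℕ, {p : StoneCech X | 1/(n+1 : ℝ) ≤ ‖betaExt (h i) p‖} ⊆ V i := by
        intro n p hp
        show betaExt (h i) p ≠ 0
        intro h0
        rw [mem_setOf_eq, h0, norm_zero] at hp
        have hpos : (0:ℝ) < 1/(n+1:ℝ) := by positivity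
        linarith
      refine ⟨fun n => {p | 1/(n+1 : ℝ) ≤ ‖betaExt (h i) p‖}, ?_, hKsub, ?_⟩
      · intro n
        exact (isClosed_le continuous_const (continuous_betaExt _).norm).isCompact
      · apply Subset.antisymm
        · intro p hp
          have hpos : 0 < ‖betaExt (h i) p‖ := norm_pos_iff.2 hp
          obtain ⟨n, hn⟩ := exists_nat_one_div_lt hpos
          exact mem_iUnion.2 ⟨n, le_of_lt hn⟩
        · exact iUnion_subset hKsub
    refine paracompact_of_disjoint_open_cover
      (W := fun i : I => (Subtype.val ⁻¹' V i : Set ↥(lambdaSet H))) ?_ ?_ ?_ ?_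
    · exact fun i => (hVopen i).preimage continuous_subtype_val
    · intro i j hij
      refine Set.disjoint_left.2 ?_
      intro z hzi hzj
      exact hVdisj i j hij z.1 hzi hzj
    · rw [← preimage_iUnion, ← hΛV]
      exact eq_univ_of_forall fun z => z.2
    · intro i
      obtain ⟨K, hKc, hKV, hVK⟩ := hVsig i
      haveI hlc : LocallyCompactSpace ↥(V i) :=
        (hVopen i).isLocallyClosed.locallyCompactSpace
      haveI hsc : SigmaCompactSpace ↥(V i) := by
        refine ⟨⟨fun n => Subtype.val ⁻¹' K n, ?_, ?_⟩⟩
        · intro n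
          rw [Subtype.isCompact_iff]
          have himg : Subtype.val '' (Subtype.val ⁻¹' K n : Set ↥(V i)) = K n := by
            rw [image_preimage_eq_inter_range, Subtype.range_coe,
              inter_eq_self_of_subset_left (hKV n)]
          rw [himg]
          exact hKc n
        · rw [← preimage_iUnion, ← hVK]
          exact eq_univ_of_forall fun z => z.2
      haveI hpcV : ParacompactSpace ↥(V i) := inferInstance
      have e : ↥(Subtype.val ⁻¹' V i : Set ↥(lambdaSet H)) ≃ₜ ↥(V i) :=
        { toFun := fun z => ⟨z.1.1, z.2⟩
          invFun := fun y => ⟨⟨y.1, hVΛ i y.2⟩, y.2⟩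
          left_inv := fun z => rfl
          right_inv := fun y => rfl
          continuous_toFun := (continuous_subtype_val.comp continuous_subtype_val).subtype_mk _
          continuous_invFun := (continuous_subtype_val.subtype_mk _).subtype_mk _ }
      exact e.paracompactSpace_iff.2 hpcV
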